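/- Let n and k be natural numbers with k ≤ n, and let q be any real number. Call a permutation α of {1,…,n} block-increasing if α is strictly increasing on {1,…,n-k} and strictly increasing on {n-k+1,…,n}. Then (∑_{α block-increasing} q^{inv(α)}) · [n-k]_q! · [k]_q! = [n]_q!; in particular, for -1 < q < 1 the sum ∑_{α block-increasing} q^{inv(α)} equals the Gaussian binomial coefficient [n]_q!/([n-k]_q! [k]_q!). -/

import Mathlib

/-- The `q`-integer `[n]_q = ∑_{i=0}^{n-1} q^i`. -/
noncomputable def qInt (q : ℝ) (n : ℕ) : ℝ := ∑ i ∈ Finset.range n, q ^ i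

/-- The `q`-factorial `[n]_q! = ∏_{k=1}^{n} [k]_q`, with `[0]_q! = 1`. -/
noncomputable def qFact (q : ℝ) (n : ℕ) : ℝ := ∏ k ∈ Finset.range n, qInt q (k + 1)

/-- The number of inversions of a permutation `σ` of `{0, …, n-1}`:
the number of pairs `(i, j)` with `i < j` and `σ j < σ i`. -/
def inversions {n : ℕ} (σ : Equiv.Perm (Fin n)) : ℕ :=
  (Finset.univ.filter fun p : Fin n × Fin n => p.1 < p.2 ∧ σ p.2 < σ p.1).card

/-- A permutation of `{0, …, n-1}` is block-increasing (with respect to the splitting into the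
first `n - k` positions and the last `k` positions) if it is strictly increasing on each block. -/
def BlockIncreasing {n : ℕ} (k : ℕ) (α : Equiv.Perm (Fin n)) : Prop :=
  (∀ i j : Fin n, i < j → (j : ℕ) < n - k → α i < α j) ∧
  (∀ i j : Fin n, i < j → n - k ≤ (i : ℕ) → α i < α j)

instance {n k : ℕ} : DecidablePred (BlockIncreasing (n := n) k) := fun _ => by
  unfold BlockIncreasing; infer_instance

open Finset Equiv

namespace BIAux

variable {n k : ℕ}

def emb1 : Fin (n - k) → Fin n := Fin.castLE (Nat.sub_le n k)

@[simp] lemma emb1_val (i : Fin (n - k)) : ((emb1 i : Fin n) : ℕ) = (i : ℕ) := rfl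

lemma emb1_strictMono : StrictMono (emb1 : Fin (n - k) → Fin n) := by
  intro a b hab
  simp only [Fin.lt_def] at *
  exact hab

def emb2 (h : k ≤ n) : Fin k → Fin n := fun j => ⟨n - k + j, by omega⟩

@[simp] lemma emb2_val (h : k ≤ n) (j : Fin k) : ((emb2 h j : Fin n) : ℕ) = n - k + j := rfl

lemma emb2_strictMono (h : k ≤ n) : StrictMono (emb2 h) := by
  intro a b hab
  simp only [Fin.lt_def, emb2]
  have := (Fin.lt_def).1 hab
  omega

def esum (h : k ≤ n) : (Fin (n - k) ⊕ Fin k) ≃ Fin n :=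
  finSumFinEquiv.trans (finCongr (by omega))

lemma esum_inl (h : k ≤ n) (i : Fin (n - k)) : esum h (Sum.inl i) = emb1 i := by
  simp [esum, emb1, Fin.ext_iff]

lemma esum_inr (h : k ≤ n) (j : Fin k) : esum h (Sum.inr j) = emb2 h j := by
  simp [esum, emb2, Fin.ext_iff]

def dlt (h : k ≤ n) (β : Perm (Fin (n - k))) (γ : Perm (Fin k)) : Perm (Fin n) :=
  (esum h).permCongr (Equiv.sumCongr β γ)

lemma dlt_emb1 (h : k ≤ n) (β : Perm (Fin (n - k))) (γ : Perm (Fin k)) (i : Fin (n - k)) :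
    dlt h β γ (emb1 i) = emb1 (β i) := by
  rw [← esum_inl h i, dlt, Equiv.permCongr_apply, Equiv.symm_apply_apply, ← esum_inl h (β i)]
  rfl

lemma dlt_emb2 (h : k ≤ n) (β : Perm (Fin (n - k))) (γ : Perm (Fin k)) (j : Fin k) :
    dlt h β γ (emb2 h j) = emb2 h (γ j) := by
  rw [← esum_inr h j, dlt, Equiv.permCongr_apply, Equiv.symm_apply_apply, ← esum_inr h (γ j)]
  rfl

lemma eq_emb1 (h : k ≤ n) (x : Fin n) (hx : (x : ℕ) < n - k) : x = emb1 ⟨(x : ℕ), hx⟩ := by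
  simp [emb1, Fin.ext_iff]

lemma eq_emb2 (h : k ≤ n) (x : Fin n) (hx : n - k ≤ (x : ℕ)) :
    x = emb2 h ⟨(x : ℕ) - (n - k), by omega⟩ := by
  simp only [emb2, Fin.ext_iff]
  omega

lemma dlt_val_lt_iff (h : k ≤ n) (β : Perm (Fin (n - k))) (γ : Perm (Fin k)) (x : Fin n) :
    ((dlt h β γ x : ℕ) < n - k) ↔ (x : ℕ) < n - k := by
  constructor
  · intro hd
    by_contra hx
    push_neg at hx
    rw [eq_emb2 h x hx, dlt_emb2] at hd
    simp at hd
  · intro hx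
    rw [eq_emb1 h x hx, dlt_emb1]
    simp

lemma dlt_mul (h : k ≤ n) (β β' : Perm (Fin (n - k))) (γ γ' : Perm (Fin k)) :
    dlt h β γ * dlt h β' γ' = dlt h (β * β') (γ * γ') := by
  ext x
  obtain ⟨s, rfl⟩ := (esum h).surjective x
  simp only [Perm.mul_apply, dlt, Equiv.permCongr_apply, Equiv.symm_apply_apply]
  cases s <;> simp

lemma dlt_one (h : k ≤ n) : dlt h 1 1 = 1 := by
  ext x
  obtain ⟨s, rfl⟩ := (esum h).surjective x
  simp only [dlt, Equiv.permCongr_apply, Equiv.symm_apply_apply]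
  cases s <;> simp

lemma dlt_mul_inv (h : k ≤ n) (β : Perm (Fin (n - k))) (γ : Perm (Fin k)) :
    dlt h β γ * dlt h β⁻¹ γ⁻¹ = 1 := by
  rw [dlt_mul, mul_inv_cancel, mul_inv_cancel, dlt_one]

end BIAux

namespace BIAux

variable {n k : ℕ}

lemma bi_of (h : k ≤ n) (α : Perm (Fin n))
    (h1 : StrictMono fun i : Fin (n - k) => α (emb1 i))
    (h2 : StrictMono fun j : Fin k => α (emb2 h j)) : BlockIncreasing k α := by
  constructor
  · intro i j hij hj
    have hi : (i : ℕ) < n - k := lt_trans ((Fin.lt_def).1 hij) hj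
    rw [eq_emb1 h i hi, eq_emb1 h j hj]
    exact h1 (show (⟨(i : ℕ), hi⟩ : Fin (n - k)) < ⟨(j : ℕ), hj⟩ from (Fin.lt_def).1 hij)
  · intro i j hij hi
    have hij' := (Fin.lt_def).1 hij
    have hj : n - k ≤ (j : ℕ) := by omega
    rw [eq_emb2 h i hi, eq_emb2 h j hj]
    exact h2 (show (⟨(i : ℕ) - (n - k), _⟩ : Fin k) < ⟨(j : ℕ) - (n - k), _⟩ by
      simp only [Fin.lt_def]; omega)

lemma bi_mono1 {α : Perm (Fin n)} (hb : BlockIncreasing k α) :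
    StrictMono fun i : Fin (n - k) => α (emb1 i) := by
  intro i j hij
  exact hb.1 (emb1 i) (emb1 j) (emb1_strictMono hij) j.2

lemma bi_mono2 (h : k ≤ n) {α : Perm (Fin n)} (hb : BlockIncreasing k α) :
    StrictMono fun j : Fin k => α (emb2 h j) := by
  intro i j hij
  exact hb.2 (emb2 h i) (emb2 h j) (emb2_strictMono h hij) (Nat.le_add_right _ _)

lemma mem_invSet {m : ℕ} (σ : Perm (Fin m)) (p : Fin m × Fin m) :
    p ∈ (Finset.univ.filter fun p : Fin m × Fin m => p.1 < p.2 ∧ σ p.2 < σ p.1) ↔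
      p.1 < p.2 ∧ σ p.2 < σ p.1 := by simp


lemma inversions_mul (h : k ≤ n) (α : Perm (Fin n)) (hα : BlockIncreasing k α)
    (β : Perm (Fin (n - k))) (γ : Perm (Fin k)) :
    inversions (α * dlt h β γ) = inversions α + inversions β + inversions γ := by
  have happ1 : ∀ i : Fin (n - k), (α * dlt h β γ) (emb1 i) = α (emb1 (β i)) := fun i => by
    rw [Equiv.Perm.mul_apply, dlt_emb1]
  have happ2 : ∀ j : Fin k, (α * dlt h β γ) (emb2 h j) = α (emb2 h (γ j)) := fun j => by
    rw [Equiv.Perm.mul_apply, dlt_emb2]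
  set I : Finset (Fin n × Fin n) :=
    Finset.univ.filter fun p : Fin n × Fin n =>
      p.1 < p.2 ∧ (α * dlt h β γ) p.2 < (α * dlt h β γ) p.1 with hI
  have memI : ∀ p : Fin n × Fin n,
      p ∈ I ↔ p.1 < p.2 ∧ (α * dlt h β γ) p.2 < (α * dlt h β γ) p.1 := fun p => by
    simp only [hI, Finset.mem_filter, Finset.mem_univ, true_and]
  have split1 : (I.filter fun p => ((p.2 : ℕ) < n - k)).card
      + (I.filter fun p => ¬((p.2 : ℕ) < n - k)).card = I.card :=
    Finset.card_filter_add_card_filter_not _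
  have split2 : ((I.filter fun p => ¬((p.2 : ℕ) < n - k)).filter fun p => ((p.1 : ℕ) < n - k)).card
      + ((I.filter fun p => ¬((p.2 : ℕ) < n - k)).filter fun p => ¬((p.1 : ℕ) < n - k)).card
      = (I.filter fun p => ¬((p.2 : ℕ) < n - k)).card :=
    Finset.card_filter_add_card_filter_not _
  -- part 1 : both indices in first block
  have part1 : (I.filter fun p => ((p.2 : ℕ) < n - k)).card = inversions β := by
    rw [inversions]
    refine Finset.card_bij'
      (fun p hp => ((⟨(p.1 : ℕ), by
          rcases Finset.mem_filter.1 hp with ⟨hpI, h2⟩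
          exact lt_trans ((Fin.lt_def).1 ((memI p).1 hpI).1) h2⟩ : Fin (n - k)),
        (⟨(p.2 : ℕ), (Finset.mem_filter.1 hp).2⟩ : Fin (n - k))))
      (fun p _ => (emb1 p.1, emb1 p.2)) ?_ ?_ ?_ ?_
    · intro p hp
      rcases Finset.mem_filter.1 hp with ⟨hpI, h2⟩
      rcases (memI p).1 hpI with ⟨h12, hinv⟩
      have hp1 : (p.1 : ℕ) < n - k := lt_trans ((Fin.lt_def).1 h12) h2
      beta_reduce
      rw [mem_invSet]
      refine ⟨Fin.mk_lt_mk.2 ((Fin.lt_def).1 h12), ?_⟩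
      rw [eq_emb1 h p.1 hp1, eq_emb1 h p.2 h2, happ1, happ1] at hinv
      exact (bi_mono1 hα).lt_iff_lt.1 hinv
    · intro p hp
      rw [mem_invSet] at hp
      rcases hp with ⟨h12, hinv⟩
      rw [Finset.mem_filter, memI]
      refine ⟨⟨emb1_strictMono h12, ?_⟩, (p.2).2⟩
      rw [happ1, happ1]
      exact bi_mono1 hα hinv
    · intro p hp
      simp [emb1, Prod.ext_iff, Fin.ext_iff]
    · intro p hp
      simp [emb1, Prod.ext_iff, Fin.ext_iff]
  -- part 3 : both indices in second block
  have part3 : ((I.filter fun p => ¬((p.2 : ℕ) < n - k)).filter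
      fun p => ¬((p.1 : ℕ) < n - k)).card = inversions γ := by
    rw [inversions]
    refine Finset.card_bij'
      (fun p hp => ((⟨(p.1 : ℕ) - (n - k), by
          have h1 : ¬((p.1 : ℕ) < n - k) := (Finset.mem_filter.1 hp).2
          have := (p.1).2; omega⟩ : Fin k),
        (⟨(p.2 : ℕ) - (n - k), by
          have h2 : ¬((p.2 : ℕ) < n - k) :=
            (Finset.mem_filter.1 (Finset.mem_filter.1 hp).1).2
          have := (p.2).2; omega⟩ : Fin k)))
      (fun p _ => (emb2 h p.1, emb2 h p.2)) ?_ ?_ ?_ ?_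
    · intro p hp
      have h1 : ¬((p.1 : ℕ) < n - k) := (Finset.mem_filter.1 hp).2
      have h2 : ¬((p.2 : ℕ) < n - k) :=
        (Finset.mem_filter.1 (Finset.mem_filter.1 hp).1).2
      rcases (memI p).1 (Finset.mem_filter.1 (Finset.mem_filter.1 hp).1).1 with ⟨h12, hinv⟩
      have hv12 := (Fin.lt_def).1 h12
      beta_reduce
      rw [mem_invSet]
      refine ⟨Fin.mk_lt_mk.2 (by omega), ?_⟩
      have e1 : n - k ≤ (p.1 : ℕ) := by omega
      have e2 : n - k ≤ (p.2 : ℕ) := by omega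
      rw [eq_emb2 h p.1 e1, eq_emb2 h p.2 e2, happ2, happ2] at hinv
      exact (bi_mono2 h hα).lt_iff_lt.1 hinv
    · intro p hp
      rw [mem_invSet] at hp
      rcases hp with ⟨h12, hinv⟩
      rw [Finset.mem_filter, Finset.mem_filter, memI]
      refine ⟨⟨⟨emb2_strictMono h h12, ?_⟩, ?_⟩, ?_⟩
      · rw [happ2, happ2]
        exact bi_mono2 h hα hinv
      · simp
      · simp
    · intro p hp
      have h1 : ¬((p.1 : ℕ) < n - k) := (Finset.mem_filter.1 hp).2
      have h2 : ¬((p.2 : ℕ) < n - k) :=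
        (Finset.mem_filter.1 (Finset.mem_filter.1 hp).1).2
      simp only [emb2, Prod.ext_iff, Fin.ext_iff]
      omega
    · intro p hp
      simp only [emb2, Prod.ext_iff, Fin.ext_iff]
      omega
  -- part 2 : cross-block inversions = inversions α
  have part2 : ((I.filter fun p => ¬((p.2 : ℕ) < n - k)).filter
      fun p => ((p.1 : ℕ) < n - k)).card = inversions α := by
    rw [inversions]
    have hIα : (Finset.univ.filter fun p : Fin n × Fin n => p.1 < p.2 ∧ α p.2 < α p.1)
        = ((Finset.univ.filter fun p : Fin n × Fin n => p.1 < p.2 ∧ α p.2 < α p.1).filter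
            fun p => ¬((p.2 : ℕ) < n - k) ∧ ((p.1 : ℕ) < n - k)) := by
      symm
      apply Finset.filter_true_of_mem
      intro p hp
      rcases (mem_invSet α p).1 hp with ⟨h12, hinv⟩
      constructor
      · intro h2
        exact absurd (hα.1 p.1 p.2 h12 h2) (not_lt.2 hinv.le)
      · by_contra h1
        push_neg at h1
        exact absurd (hα.2 p.1 p.2 h12 h1) (not_lt.2 hinv.le)
    rw [hIα]
    refine Finset.card_bij'
      (fun p _ => (dlt h β γ p.1, dlt h β γ p.2))
      (fun p _ => ((dlt h β γ)⁻¹ p.1, (dlt h β γ)⁻¹ p.2)) ?_ ?_ ?_ ?_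
    · intro p hp
      beta_reduce
      have hps : p ∈ I.filter (fun p => ¬((p.2 : ℕ) < n - k)) := (Finset.mem_filter.1 hp).1
      have hblk1 : (p.1 : ℕ) < n - k := (Finset.mem_filter.1 hp).2
      have hblk2 : ¬((p.2 : ℕ) < n - k) := (Finset.mem_filter.1 hps).2
      rcases (memI p).1 (Finset.mem_filter.1 hps).1 with ⟨h12, hinv⟩
      have hd1 : ((dlt h β γ p.1 : Fin n) : ℕ) < n - k := (dlt_val_lt_iff h β γ p.1).2 hblk1
      have hd2 : ¬(((dlt h β γ p.2 : Fin n) : ℕ) < n - k) := fun hc =>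
        hblk2 ((dlt_val_lt_iff h β γ p.2).1 hc)
      exact Finset.mem_filter.2 ⟨Finset.mem_filter.2 ⟨Finset.mem_univ _,
        Fin.lt_def.2 (show ((dlt h β γ p.1 : Fin n) : ℕ) < ((dlt h β γ p.2 : Fin n) : ℕ)
          by omega), hinv⟩, hd2, hd1⟩
    · intro p hp
      beta_reduce
      have hmem : p ∈ Finset.univ.filter
          (fun p : Fin n × Fin n => p.1 < p.2 ∧ α p.2 < α p.1) := (Finset.mem_filter.1 hp).1
      obtain ⟨hblk2, hblk1⟩ := (Finset.mem_filter.1 hp).2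
      rcases (mem_invSet α p).1 hmem with ⟨h12, hinv⟩
      have e1 : dlt h β γ ((dlt h β γ)⁻¹ p.1) = p.1 := (dlt h β γ).apply_symm_apply p.1
      have e2 : dlt h β γ ((dlt h β γ)⁻¹ p.2) = p.2 := (dlt h β γ).apply_symm_apply p.2
      have hd1 : (((dlt h β γ)⁻¹ p.1 : Fin n) : ℕ) < n - k := by
        rw [← dlt_val_lt_iff h β γ ((dlt h β γ)⁻¹ p.1), e1]
        exact hblk1
      have hd2 : ¬((((dlt h β γ)⁻¹ p.2 : Fin n) : ℕ) < n - k) := by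
        rw [← dlt_val_lt_iff h β γ ((dlt h β γ)⁻¹ p.2), e2]
        omega
      refine Finset.mem_filter.2 ⟨Finset.mem_filter.2 ⟨(memI _).2
        ⟨Fin.lt_def.2 (show (((dlt h β γ)⁻¹ p.1 : Fin n) : ℕ) < (((dlt h β γ)⁻¹ p.2 : Fin n) : ℕ)
          by omega), ?_⟩, hd2⟩, hd1⟩
      show α ((dlt h β γ) ((dlt h β γ)⁻¹ p.2)) < α ((dlt h β γ) ((dlt h β γ)⁻¹ p.1))
      rw [e1, e2]
      exact hinv
    · intro p hp
      simp
    · intro p hp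
      simp
  rw [show inversions (α * dlt h β γ) = I.card from rfl, ← split1, ← split2, part1, part2, part3]
  ring

end BIAux

namespace BIAux

variable {n k : ℕ}

lemma emb1_injective : Function.Injective (emb1 : Fin (n - k) → Fin n) :=
  emb1_strictMono.injective

lemma emb2_injective (h : k ≤ n) : Function.Injective (emb2 h) :=
  (emb2_strictMono h).injective

lemma sort_eq_of_monotone {m : ℕ} {f : Fin m → Fin n} (hinj : Function.Injective f)
    (τ : Perm (Fin m)) (hmono : Monotone (f ∘ τ)) : τ = Tuple.sort f := by
  have hcomp : f ∘ τ = f ∘ Tuple.sort f := Tuple.comp_sort_eq_comp_iff_monotone.2 hmono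
  refine Equiv.ext fun x => hinj (congrFun hcomp x)

lemma psi1_bi (h : k ≤ n) (σ : Perm (Fin n)) :
    BlockIncreasing k (σ * dlt h (Tuple.sort fun i => σ (emb1 i))
      (Tuple.sort fun j => σ (emb2 h j))) := by
  apply bi_of h
  · have he : (fun i : Fin (n - k) => (σ * dlt h (Tuple.sort fun i => σ (emb1 i))
        (Tuple.sort fun j => σ (emb2 h j))) (emb1 i))
        = (fun i => σ (emb1 i)) ∘ (Tuple.sort fun i => σ (emb1 i)) := by
      funext i
      simp [Equiv.Perm.mul_apply, dlt_emb1]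
    rw [he]
    exact (Tuple.monotone_sort _).strictMono_of_injective
      ((σ.injective.comp emb1_injective).comp (Equiv.injective _))
  · have he : (fun j : Fin k => (σ * dlt h (Tuple.sort fun i => σ (emb1 i))
        (Tuple.sort fun j => σ (emb2 h j))) (emb2 h j))
        = (fun j => σ (emb2 h j)) ∘ (Tuple.sort fun j => σ (emb2 h j)) := by
      funext j
      simp [Equiv.Perm.mul_apply, dlt_emb2]
    rw [he]
    exact (Tuple.monotone_sort _).strictMono_of_injective
      ((σ.injective.comp (emb2_injective h)).comp (Equiv.injective _))

lemma core (q : ℝ) (h : k ≤ n) :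
    (∑ α ∈ Finset.univ.filter (BlockIncreasing (n := n) k), q ^ inversions α) *
      (∑ β : Perm (Fin (n - k)), q ^ inversions β) *
      (∑ γ : Perm (Fin k), q ^ inversions γ)
      = ∑ σ : Perm (Fin n), q ^ inversions σ := by
  have step1 : (∑ α ∈ Finset.univ.filter (BlockIncreasing (n := n) k), q ^ inversions α) *
      (∑ β : Perm (Fin (n - k)), q ^ inversions β) *
      (∑ γ : Perm (Fin k), q ^ inversions γ)
      = ∑ t ∈ (Finset.univ.filter (BlockIncreasing (n := n) k)) ×ˢ
          ((Finset.univ : Finset (Perm (Fin (n - k)))) ×ˢ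
           (Finset.univ : Finset (Perm (Fin k)))),
          q ^ (inversions t.1 + inversions t.2.1 + inversions t.2.2) := by
    simp only [Finset.sum_product, pow_add, ← Finset.sum_mul, ← Finset.mul_sum]
  rw [step1]
  refine Finset.sum_nbij' (fun t => t.1 * dlt h t.2.1 t.2.2)
    (fun σ => (σ * dlt h (Tuple.sort fun i => σ (emb1 i)) (Tuple.sort fun j => σ (emb2 h j)),
      (Tuple.sort fun i => σ (emb1 i))⁻¹, (Tuple.sort fun j => σ (emb2 h j))⁻¹))
    ?_ ?_ ?_ ?_ ?_
  · intro t _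
    exact Finset.mem_univ _
  · intro σ _
    beta_reduce
    refine Finset.mem_product.2 ⟨Finset.mem_filter.2 ⟨Finset.mem_univ _, psi1_bi h σ⟩,
      Finset.mem_product.2 ⟨Finset.mem_univ _, Finset.mem_univ _⟩⟩
  · rintro ⟨α, β, γ⟩ ht
    have hα : BlockIncreasing k α :=
      (Finset.mem_filter.1 (Finset.mem_product.1 ht).1).2
    have hs1 : (Tuple.sort fun i => (α * dlt h β γ) (emb1 i)) = β⁻¹ := by
      symm
      refine sort_eq_of_monotone ?_ _ ?_
      · exact (Equiv.injective _).comp emb1_injective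
      have he : (fun i : Fin (n - k) => (α * dlt h β γ) (emb1 i)) ∘ ⇑β⁻¹
          = fun i => α (emb1 i) := by
        funext i
        simp [Equiv.Perm.mul_apply, dlt_emb1]
      rw [he]
      exact (bi_mono1 hα).monotone
    have hs2 : (Tuple.sort fun j => (α * dlt h β γ) (emb2 h j)) = γ⁻¹ := by
      symm
      refine sort_eq_of_monotone ?_ _ ?_
      · exact (Equiv.injective _).comp (emb2_injective h)
      have he : (fun j : Fin k => (α * dlt h β γ) (emb2 h j)) ∘ ⇑γ⁻¹
          = fun j => α (emb2 h j) := by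
        funext j
        simp [Equiv.Perm.mul_apply, dlt_emb2]
      rw [he]
      exact (bi_mono2 h hα).monotone
    simp only [hs1, hs2, mul_assoc, dlt_mul_inv, mul_one, inv_inv]
  · intro σ _
    simp only [mul_assoc, dlt_mul_inv, mul_one]
  · rintro ⟨α, β, γ⟩ ht
    have hα : BlockIncreasing k α :=
      (Finset.mem_filter.1 (Finset.mem_product.1 ht).1).2
    show q ^ (inversions α + inversions β + inversions γ) = q ^ inversions (α * dlt h β γ)
    rw [inversions_mul h α hα β γ]

end BIAux

namespace BIAux

variable {m : ℕ}

def ains (a : Fin (m + 1)) : Perm (Fin (m + 1)) :=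
  (finSuccEquiv' (0 : Fin (m + 1))).trans (finSuccEquiv' a).symm

lemma ains_zero (a : Fin (m + 1)) : ains a 0 = a := by
  rw [ains, Equiv.trans_apply, finSuccEquiv'_at, finSuccEquiv'_symm_none]

lemma ains_succ (a : Fin (m + 1)) (i : Fin m) : ains a i.succ = a.succAbove i := by
  have h0 : (finSuccEquiv' (0 : Fin (m + 1))) i.succ = some i := by
    rw [← Fin.zero_succAbove i, finSuccEquiv'_succAbove]
  rw [ains, Equiv.trans_apply, h0, finSuccEquiv'_symm_some]

lemma ains_bi (a : Fin (m + 1)) : BlockIncreasing m (ains a) := by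
  apply bi_of (show m ≤ m + 1 by omega)
  · intro i j hij
    exfalso
    have h1 := j.2
    have h2 := Fin.lt_def.1 hij
    omega
  · have he : (fun j : Fin m => ains a (emb2 (show m ≤ m + 1 by omega) j))
        = fun j : Fin m => a.succAbove j := by
      funext j
      have : emb2 (show m ≤ m + 1 by omega) j = j.succ := by
        simp only [emb2, Fin.ext_iff, Fin.val_succ]
        omega
      rw [this, ains_succ]
    rw [he]
    exact Fin.strictMono_succAbove a

lemma ains_inversions (a : Fin (m + 1)) : inversions (ains a) = (a : ℕ) := by
  rw [inversions, ← Finset.card_range (a : ℕ)]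
  refine Finset.card_bij' (fun p _ => ((p.2 : ℕ) - 1)) (fun r hr =>
      ((0 : Fin (m + 1)), (⟨r + 1, by
        have := Finset.mem_range.1 hr
        have := a.2
        omega⟩ : Fin (m + 1)))) ?_ ?_ ?_ ?_
  · intro p hp
    beta_reduce
    rw [mem_invSet] at hp
    obtain ⟨h12, hinv⟩ := hp
    have hp1 : (p.1 : ℕ) = 0 := by
      by_contra hc
      have h1 : m + 1 - m ≤ (p.1 : ℕ) := by omega
      exact absurd ((ains_bi a).2 p.1 p.2 h12 h1) (not_lt.2 hinv.le)
    have hp2pos : 1 ≤ (p.2 : ℕ) := by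
      have := Fin.lt_def.1 h12
      omega
    have hsucc : p.2 = Fin.succ ⟨(p.2 : ℕ) - 1, by have := p.2.2; omega⟩ := by
      simp only [Fin.ext_iff, Fin.val_succ]
      omega
    have h0 : p.1 = 0 := by
      simp only [Fin.ext_iff, Fin.val_zero]
      exact hp1
    rw [h0, ains_zero, hsucc, ains_succ] at hinv
    rw [Fin.succAbove_lt_iff_castSucc_lt] at hinv
    have hval := Fin.lt_def.1 hinv
    simp only [Fin.coe_castSucc, Fin.val_mk] at hval
    exact Finset.mem_range.2 (by omega)
  · intro r hr
    beta_reduce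
    have hra := Finset.mem_range.1 hr
    rw [mem_invSet]
    constructor
    · rw [Fin.lt_def]
      simp
    · have hsucc : (⟨r + 1, by have := a.2; omega⟩ : Fin (m + 1))
          = Fin.succ ⟨r, by have := a.2; omega⟩ := by
        simp [Fin.ext_iff]
      rw [ains_zero, hsucc, ains_succ, Fin.succAbove_lt_iff_castSucc_lt]
      rw [Fin.lt_def]
      simpa using hra
  · intro p hp
    beta_reduce
    rw [mem_invSet] at hp
    obtain ⟨h12, hinv⟩ := hp
    have hp1 : (p.1 : ℕ) = 0 := by
      by_contra hc
      have h1 : m + 1 - m ≤ (p.1 : ℕ) := by omega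
      exact absurd ((ains_bi a).2 p.1 p.2 h12 h1) (not_lt.2 hinv.le)
    have hp2pos : 1 ≤ (p.2 : ℕ) := by
      have := Fin.lt_def.1 h12
      omega
    simp only [Prod.ext_iff, Fin.ext_iff, Fin.val_zero, Fin.val_mk]
    constructor <;> omega
  · intro r hr
    beta_reduce
    simp only [Fin.val_mk]
    omega

lemma bi_unique (α : Perm (Fin (m + 1))) (hα : BlockIncreasing m α) : α = ains (α 0) := by
  have hsm : StrictMono fun i : Fin m => α i.succ := by
    intro i j hij
    refine hα.2 _ _ (Fin.succ_lt_succ_iff.2 hij) ?_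
    simp only [Fin.val_succ]
    omega
  have hsm2 : StrictMono ((α 0).succAbove) := Fin.strictMono_succAbove _
  have hrange : Set.range (fun i : Fin m => α i.succ) = Set.range ((α 0).succAbove) := by
    rw [Fin.range_succAbove]
    ext y
    simp only [Set.mem_range, Set.mem_compl_iff, Set.mem_singleton_iff]
    constructor
    · rintro ⟨i, rfl⟩
      exact fun hy => (Fin.succ_ne_zero i) (α.injective hy)
    · intro hy
      obtain ⟨x, rfl⟩ := α.surjective y
      have hx : x ≠ 0 := fun hc => hy (by rw [hc])
      exact ⟨x.pred hx, by rw [Fin.succ_pred]⟩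
  letI : WellFoundedLT (Fin m) := Finite.to_wellFoundedLT
  have heq := (hsm.range_inj hsm2).1 hrange
  refine Equiv.ext fun x => ?_
  refine Fin.cases ?_ ?_ x
  · rw [ains_zero]
  · intro i
    rw [ains_succ]
    exact congrFun heq i

lemma sum_bi_succ (q : ℝ) (m : ℕ) :
    (∑ α ∈ Finset.univ.filter (BlockIncreasing (n := m + 1) m), q ^ inversions α)
      = qInt q (m + 1) := by
  rw [qInt, ← Fin.sum_univ_eq_sum_range (fun i => q ^ i) (m + 1)]
  refine Finset.sum_nbij' (fun α => α 0) (fun a => ains a) ?_ ?_ ?_ ?_ ?_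
  · intro α _
    exact Finset.mem_univ _
  · intro a _
    exact Finset.mem_filter.2 ⟨Finset.mem_univ _, ains_bi a⟩
  · intro α hmem
    exact (bi_unique α (Finset.mem_filter.1 hmem).2).symm
  · intro a _
    exact ains_zero a
  · intro α hmem
    have hb := bi_unique α (Finset.mem_filter.1 hmem).2
    show q ^ inversions α = q ^ ((α 0 : Fin (m + 1)) : ℕ)
    rw [hb, ains_inversions]
    rw [← hb]

lemma sum_perm_small (q : ℝ) (m : ℕ) (hm : m ≤ 1) :
    (∑ σ : Perm (Fin m), q ^ inversions σ) = 1 := by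
  have hinv : ∀ σ : Perm (Fin m), inversions σ = 0 := by
    intro σ
    rw [inversions, Finset.card_eq_zero, Finset.filter_eq_empty_iff]
    intro p _
    rintro ⟨h12, -⟩
    have h1 := p.2.2
    have h2 := Fin.lt_def.1 h12
    omega
  simp only [hinv, pow_zero]
  rw [Finset.sum_const, Finset.card_univ, Fintype.card_perm, Fintype.card_fin]
  interval_cases m <;> norm_num [Nat.factorial]

lemma sum_perm_eq_qFact (q : ℝ) : ∀ m, (∑ σ : Perm (Fin m), q ^ inversions σ) = qFact q m := by
  intro m
  induction m with
  | zero =>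
    rw [sum_perm_small q 0 (by omega), qFact, Finset.prod_range_zero]
  | succ m ih =>
    have hcore := core q (show m ≤ m + 1 by omega)
    have h1 : m + 1 - m = 1 := by omega
    rw [h1] at hcore
    rw [sum_bi_succ q m, ih, sum_perm_small q 1 (by omega)] at hcore
    have hstep : qFact q (m + 1) = qFact q m * qInt q (m + 1) :=
      Finset.prod_range_succ _ m
    rw [← hcore, hstep]
    ring

end BIAux

theorem sum_blockIncreasing_q_pow_inversions (q : ℝ) (n k : ℕ) (h : k ≤ n) :
    (∑ α ∈ Finset.univ.filter (BlockIncreasing (n := n) k), q ^ inversions α) *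
        qFact q (n - k) * qFact q k = qFact q n ∧
    ((-1 < q ∧ q < 1) →
      ∑ α ∈ Finset.univ.filter (BlockIncreasing (n := n) k), q ^ inversions α =
        qFact q n / (qFact q (n - k) * qFact q k)) := by
  have h1 : (∑ α ∈ Finset.univ.filter (BlockIncreasing (n := n) k), q ^ inversions α) *
      qFact q (n - k) * qFact q k = qFact q n := by
    have hcore := BIAux.core q h
    rw [BIAux.sum_perm_eq_qFact q (n - k), BIAux.sum_perm_eq_qFact q k,
      BIAux.sum_perm_eq_qFact q n] at hcore
    exact hcore
  refine ⟨h1, ?_⟩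
  rintro ⟨hq1, hq2⟩
  have habs : |q| < 1 := abs_lt.2 ⟨hq1, hq2⟩
  have hqint : ∀ j : ℕ, 0 < qInt q (j + 1) := by
    intro j
    rcases eq_or_ne q 1 with rfl | hq
    · exact absurd hq2 (by norm_num)
    · have hgeom : qInt q (j + 1) = (q ^ (j + 1) - 1) / (q - 1) := by
        rw [qInt]; exact geom_sum_eq hq _
      rw [hgeom]
      apply div_pos_of_neg_of_neg
      · have hlt : |q| ^ (j + 1) < 1 := pow_lt_one₀ (abs_nonneg q) habs (Nat.succ_ne_zero j)
        have hle : q ^ (j + 1) ≤ |q| ^ (j + 1) := by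
          rw [← abs_pow]; exact le_abs_self _
        linarith
      · linarith
  have hfact : ∀ j : ℕ, 0 < qFact q j := by
    intro j
    rw [qFact]
    exact Finset.prod_pos fun i _ => hqint i
  have hne : qFact q (n - k) * qFact q k ≠ 0 :=
    ne_of_gt (mul_pos (hfact _) (hfact _))
  rw [eq_div_iff hne, ← mul_assoc]
  exact h1
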